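/- arXiv:1309.3099 — 2 statements merged into one kernel-verified Lean document; each statement's English description precedes it below -/
import Mathlib

section
/- Suppose g is analytic on an open set containing a closed square B ⊂ ℂ of side length s > 0, g'(z) ≠ 0 for z ∈ B, and s · sup_{z∈B} |g''(z)/g'(z)| ≤ 1/(√2·s + 1). Then g is injective on B. -/
set_option maxHeartbeats 1000000

open Complex


lemma stmt4_aux1 : ∫ t in (0:ℝ)..1, |t - 1/2| = 1/4 := by
  have hcabs : Continuous (fun t : ℝ => |t - 1/2|) := (continuous_id.sub continuous_const).abs
  rw [← intervalIntegral.integral_add_adjacent_intervals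
    (hcabs.intervalIntegrable 0 (1/2)) (hcabs.intervalIntegrable (1/2) 1)]
  have e1 : ∫ t in (0:ℝ)..(1/2), |t - 1/2| = ∫ t in (0:ℝ)..(1/2), (1/2 - t) := by
    apply intervalIntegral.integral_congr
    intro t ht
    rw [Set.uIcc_of_le (by norm_num : (0:ℝ) ≤ 1/2)] at ht
    show |t - 1/2| = 1/2 - t
    rw [abs_of_nonpos (by linarith [ht.2])]; ring
  have e2 : ∫ t in (1/2:ℝ)..1, |t - 1/2| = ∫ t in (1/2:ℝ)..1, (t - 1/2) := by
    apply intervalIntegral.integral_congr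
    intro t ht
    rw [Set.uIcc_of_le (by norm_num : (1/2:ℝ) ≤ 1)] at ht
    show |t - 1/2| = t - 1/2
    rw [_root_.abs_of_nonneg (by linarith [ht.1])]
  rw [e1, e2,
    intervalIntegral.integral_sub intervalIntegrable_const intervalIntegral.intervalIntegrable_id,
    intervalIntegral.integral_sub intervalIntegral.intervalIntegrable_id intervalIntegrable_const]
  simp [integral_id]
  norm_num

lemma stmt4_aux2 {A x t : ℝ} (h1 : A ≤ x * |t - 1/2|) (h0 : 0 ≤ t) (ht : t ≤ 1)
    (hx0 : 0 ≤ x) (hx : x ≤ 3/2) : A ≤ 1 := by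
  have h2 : |t - 1/2| ≤ 1/2 := by rw [abs_le]; constructor <;> linarith
  nlinarith

lemma stmt4_aux3 {x r : ℝ} (h1 : 1 ≤ x / 2) (hx : x ≤ r) (hr : r < 3/2) : False := by
  linarith

theorem stmt4 (g : ℂ → ℂ) (w : ℂ) (s : ℝ) (hs : 0 < s)
    (B : Set ℂ)
    (hB : B = {z : ℂ | w.re ≤ z.re ∧ z.re ≤ w.re + s ∧ w.im ≤ z.im ∧ z.im ≤ w.im + s})
    (V : Set ℂ) (hV : IsOpen V) (hBV : B ⊆ V) (hg : DifferentiableOn ℂ g V)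
    (hg' : ∀ z ∈ B, deriv g z ≠ 0)
    (hnl : s * sSup ((fun z => ‖deriv (deriv g) z / deriv g z‖) '' B)
        ≤ 1 / (Real.sqrt 2 * s + 1)) :
    Set.InjOn g B := by
  -- basic facts about √2
  have hsqrt2 : (0:ℝ) ≤ Real.sqrt 2 := Real.sqrt_nonneg 2
  have hsqrt2sq : Real.sqrt 2 ^ 2 = 2 := Real.sq_sqrt (by norm_num)
  have hsqrt2lt : Real.sqrt 2 < 3/2 := by nlinarith
  -- analyticity and continuity of the derivatives
  have hga : AnalyticOnNhd ℂ g V := hg.analyticOnNhd hV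
  have hg1a : AnalyticOnNhd ℂ (deriv g) V := hga.deriv
  have hg2a : AnalyticOnNhd ℂ (deriv (deriv g)) V := hg1a.deriv
  have hg1c : ContinuousOn (deriv g) V := hg1a.continuousOn
  have hg2c : ContinuousOn (deriv (deriv g)) V := hg2a.continuousOn
  -- diameter bound
  have hdiam : ∀ p ∈ B, ∀ q ∈ B, ‖p - q‖ ≤ Real.sqrt 2 * s := by
    intro p hp q hq
    rw [hB] at hp hq
    obtain ⟨hp1, hp2, hp3, hp4⟩ := hp
    obtain ⟨hq1, hq2, hq3, hq4⟩ := hq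
    rw [Complex.norm_def, Complex.normSq_apply]
    have h1 : (p - q).re = p.re - q.re := by simp
    have h2 : (p - q).im = p.im - q.im := by simp
    rw [h1, h2]
    have : (p.re - q.re) * (p.re - q.re) + (p.im - q.im) * (p.im - q.im) ≤ 2 * s ^ 2 := by
      nlinarith
    calc Real.sqrt ((p.re - q.re) * (p.re - q.re) + (p.im - q.im) * (p.im - q.im))
        ≤ Real.sqrt (2 * s ^ 2) := Real.sqrt_le_sqrt this
      _ = Real.sqrt 2 * s := by
          rw [Real.sqrt_mul (by norm_num), Real.sqrt_sq hs.le]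
  -- B is compact
  have hwB : w ∈ B := by
    rw [hB]
    exact ⟨le_refl _, by linarith, le_refl _, by linarith⟩
  have hBclosed : IsClosed B := by
    have : B = Complex.re ⁻¹' Set.Icc w.re (w.re + s) ∩
        Complex.im ⁻¹' Set.Icc w.im (w.im + s) := by
      ext z; simp [hB, Set.mem_Icc]; tauto
    rw [this]
    exact (isClosed_Icc.preimage Complex.continuous_re).inter
      (isClosed_Icc.preimage Complex.continuous_im)
  have hBbdd : Bornology.IsBounded B := by
    rw [Metric.isBounded_iff_subset_closedBall w]
    refine ⟨Real.sqrt 2 * s, fun z hz => ?_⟩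
    rw [Metric.mem_closedBall, Complex.dist_eq]
    exact hdiam z hz w hwB
  have hBcompact : IsCompact B := Metric.isCompact_of_isClosed_isBounded hBclosed hBbdd
  -- the sup M
  set F : ℂ → ℂ := fun z => deriv (deriv g) z / deriv g z with hF
  set M : ℝ := sSup ((fun z => ‖F z‖) '' B) with hM
  -- U: open set where deriv g ≠ 0
  set U : Set ℂ := V ∩ deriv g ⁻¹' {0}ᶜ with hU
  have hUopen : IsOpen U := hg1c.isOpen_inter_preimage hV isOpen_compl_singleton
  have hBU : B ⊆ U := fun z hz => ⟨hBV hz, hg' z hz⟩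
  have hFcont : ContinuousOn F U :=
    ContinuousOn.div (hg2c.mono Set.inter_subset_left)
      (hg1c.mono Set.inter_subset_left) (fun z hz => hz.2)
  have hMb : ∀ z ∈ B, ‖F z‖ ≤ M := by
    intro z hz
    exact le_csSup ((hBcompact.image_of_continuousOn
      ((continuous_norm.comp_continuousOn (hFcont.mono hBU)))).bddAbove)
      (Set.mem_image_of_mem _ hz)
  have hM0 : 0 ≤ M := le_trans (norm_nonneg _) (hMb w hwB)
  have hsM : s * M ≤ 1 / (Real.sqrt 2 * s + 1) := hnl
  -- begin injectivity proof
  intro a ha b hb hab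
  by_contra hne
  set c : ℂ := b - a with hc
  have hcne : c ≠ 0 := sub_ne_zero.mpr (Ne.symm hne)
  set γ : ℝ → ℂ := fun t => a + (t : ℂ) * c with hγ
  have hγcont : Continuous γ := by
    exact continuous_const.add (Complex.continuous_ofReal.mul continuous_const)
  have hγB : ∀ t ∈ Set.Icc (0:ℝ) 1, γ t ∈ B := by
    intro t ht
    rw [hB] at ha hb ⊢
    obtain ⟨ha1, ha2, ha3, ha4⟩ := ha
    obtain ⟨hb1, hb2, hb3, hb4⟩ := hb
    obtain ⟨ht0, ht1⟩ := ht
    have hre : (γ t).re = a.re + t * (b.re - a.re) := by simp [hγ, hc]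
    have him : (γ t).im = a.im + t * (b.im - a.im) := by simp [hγ, hc]
    simp only [Set.mem_setOf_eq]
    rw [hre, him]
    refine ⟨?_, ?_, ?_, ?_⟩ <;> nlinarith
  have hγU : ∀ t ∈ Set.Icc (0:ℝ) 1, γ t ∈ U := fun t ht => hBU (hγB t ht)
  have hγV : ∀ t ∈ Set.Icc (0:ℝ) 1, γ t ∈ V := fun t ht => (hγU t ht).1
  have hγne : ∀ t ∈ Set.Icc (0:ℝ) 1, deriv g (γ t) ≠ 0 := fun t ht => (hγU t ht).2
  -- O : open preimage
  set O : Set ℝ := γ ⁻¹' U with hO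
  have hOopen : IsOpen O := hUopen.preimage hγcont
  have hIO : Set.Icc (0:ℝ) 1 ⊆ O := fun t ht => hγU t ht
  -- γ has derivative c
  have hγd : ∀ t : ℝ, HasDerivAt γ c t := by
    intro t
    have h1 : HasDerivAt (fun t : ℝ => (t : ℂ)) 1 t := by
      simpa using (hasDerivAt_id t).ofReal_comp
    exact ((h1.mul_const c).const_add a).congr_deriv (one_mul c)
  -- the integrand φ
  set φ : ℝ → ℂ := fun τ => c * F (γ τ) with hφ
  have hφcont : ContinuousOn φ O := by
    exact continuousOn_const.mul (hFcont.comp hγcont.continuousOn (fun t ht => ht))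
  -- H
  set H : ℝ → ℂ := fun t => ∫ τ in (1/2:ℝ)..t, φ τ with hH
  have hsubI : ∀ t ∈ Set.Icc (0:ℝ) 1, Set.uIcc (1/2:ℝ) t ⊆ Set.Icc (0:ℝ) 1 := by
    intro t ht
    rw [show Set.Icc (0:ℝ) 1 = Set.uIcc (0:ℝ) 1 by rw [Set.uIcc_of_le]; norm_num]
    exact Set.uIcc_subset_uIcc (by rw [Set.uIcc_of_le] <;> norm_num)
      (by rw [Set.uIcc_of_le] <;> [exact ⟨ht.1, ht.2⟩; norm_num])
  have hHd : ∀ t ∈ Set.Icc (0:ℝ) 1, HasDerivAt H (φ t) t := by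
    intro t ht
    refine intervalIntegral.integral_hasDerivAt_right
      ((hφcont.mono ((hsubI t ht).trans hIO)).intervalIntegrable)
      (hφcont.stronglyMeasurableAtFilter hOopen t (hIO ht))
      ((hφcont.continuousAt (hOopen.mem_nhds (hIO ht))))
  -- the function k is constant
  set k : ℝ → ℂ := fun t => deriv g (γ t) * Complex.exp (-H t) with hk
  have hkd : ∀ t ∈ Set.Icc (0:ℝ) 1, HasDerivAt k 0 t := by
    intro t ht
    have hd1 : HasDerivAt (fun u : ℝ => deriv g (γ u)) (c * deriv (deriv g) (γ t)) t := by
      have := (((hg1a (γ t) (hγV t ht)).differentiableAt).hasDerivAt).scomp t (hγd t)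
      simpa [Function.comp_def, smul_eq_mul] using this
    have hd2 : HasDerivAt (fun u : ℝ => Complex.exp (-H u))
        (Complex.exp (-H t) * (-φ t)) t := ((hHd t ht).neg).cexp
    have := hd1.mul hd2
    have hzero : c * deriv (deriv g) (γ t) * Complex.exp (-H t) +
        deriv g (γ t) * (Complex.exp (-H t) * (-φ t)) = 0 := by
      have hne' := hγne t ht
      simp only [hφ, hF]
      field_simp
      ring
    rw [hzero] at this
    exact this
  have hkconst : ∀ t ∈ Set.Icc (0:ℝ) 1, k t = k 0 := by
    refine constant_of_has_deriv_right_zero ?_ ?_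
    · exact fun t ht => ((hkd t ht).continuousAt).continuousWithinAt
    · exact fun t ht => ((hkd t (Set.mem_Icc_of_Ico ht)).hasDerivWithinAt)
  have hH12 : H (1/2) = 0 := intervalIntegral.integral_same
  have hhalf : (1/2:ℝ) ∈ Set.Icc (0:ℝ) 1 := by norm_num
  have hkey : ∀ t ∈ Set.Icc (0:ℝ) 1,
      deriv g (γ t) = deriv g (γ (1/2)) * Complex.exp (H t) := by
    intro t ht
    have h1 : k t = k (1/2) := by rw [hkconst t ht, hkconst _ hhalf]
    rw [hk] at h1
    simp only [hH12, neg_zero, Complex.exp_zero, mul_one] at h1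
    have h2 : Complex.exp (-H t) ≠ 0 := Complex.exp_ne_zero _
    field_simp [Complex.exp_neg] at h1 ⊢
    have h3 : Complex.exp (-H t) * Complex.exp (H t) = 1 := by
      rw [← Complex.exp_add, neg_add_cancel, Complex.exp_zero]
    linear_combination Complex.exp (H t) * h1 - deriv g (γ t) * h3
  -- FTC for g along γ
  have hint1 : IntervalIntegrable (fun t => c * deriv g (γ t))
      MeasureTheory.volume 0 1 := by
    apply ContinuousOn.intervalIntegrable
    rw [Set.uIcc_of_le (by norm_num : (0:ℝ) ≤ 1)]
    exact continuousOn_const.mul (hg1c.comp hγcont.continuousOn hγV)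
  have hγ0 : γ 0 = a := by simp [hγ]
  have hγ1 : γ 1 = b := by simp [hγ, hc]
  have hFTC : ∫ t in (0:ℝ)..1, c * deriv g (γ t) = 0 := by
    have := intervalIntegral.integral_eq_sub_of_hasDerivAt
      (f := fun t => g (γ t)) (f' := fun t => c * deriv g (γ t)) ?_ hint1
    · rw [this]
      show g (γ 1) - g (γ 0) = 0
      rw [hγ1, hγ0, hab, sub_self]
    · intro t ht
      rw [Set.uIcc_of_le (by norm_num : (0:ℝ) ≤ 1)] at ht
      have := (((hga (γ t) (hγV t ht)).differentiableAt).hasDerivAt).scomp t (hγd t)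
      simpa [Function.comp_def, smul_eq_mul] using this
  -- rewrite the integral
  have hexpcont : ContinuousOn (fun t => Complex.exp (H t)) (Set.Icc (0:ℝ) 1) :=
    fun t ht => (((hHd t ht).continuousAt).cexp).continuousWithinAt
  have hintexp : IntervalIntegrable (fun t => Complex.exp (H t))
      MeasureTheory.volume 0 1 := by
    apply ContinuousOn.intervalIntegrable
    rwa [Set.uIcc_of_le (by norm_num : (0:ℝ) ≤ 1)]
  have hIeq : ∫ t in (0:ℝ)..1, Complex.exp (H t) = 0 := by
    have h1 : ∫ t in (0:ℝ)..1, c * deriv g (γ t)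
        = ∫ t in (0:ℝ)..1, (c * deriv g (γ (1/2))) * Complex.exp (H t) := by
      apply intervalIntegral.integral_congr
      intro t ht
      rw [Set.uIcc_of_le (by norm_num : (0:ℝ) ≤ 1)] at ht
      show c * deriv g (γ t) = c * deriv g (γ (1/2)) * Complex.exp (H t)
      rw [hkey t ht]; ring
    rw [h1, intervalIntegral.integral_const_mul] at hFTC
    rcases mul_eq_zero.mp hFTC with h | h
    · exact absurd h (mul_ne_zero hcne (hγne _ hhalf))
    · exact h
  -- bound on H
  set x : ℝ := ‖c‖ * M with hx
  have hxle : x ≤ Real.sqrt 2 := by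
    have h1 : ‖c‖ ≤ Real.sqrt 2 * s := hdiam b hb a ha
    have h2 : x ≤ Real.sqrt 2 * s * M :=
      mul_le_mul_of_nonneg_right h1 hM0
    have h3 : Real.sqrt 2 * s + 1 ≥ 1 := by nlinarith
    have h4 : s * M ≤ 1 := le_trans hsM (by
      rw [div_le_one (by nlinarith)]; nlinarith)
    nlinarith [mul_le_mul_of_nonneg_left h4 hsqrt2]
  have hHb : ∀ t ∈ Set.Icc (0:ℝ) 1, ‖H t‖ ≤ x * |t - 1/2| := by
    intro t ht
    have hb1 : ∀ τ ∈ Set.uIoc (1/2:ℝ) t, ‖φ τ‖ ≤ x := by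
      intro τ hτ
      have hτ' : τ ∈ Set.Icc (0:ℝ) 1 :=
        (hsubI t ht) (Set.uIoc_subset_uIcc hτ)
      rw [hφ]
      simp only [norm_mul]
      exact mul_le_mul_of_nonneg_left (hMb (γ τ) (hγB τ hτ')) (norm_nonneg c)
    have := intervalIntegral.norm_integral_le_of_norm_le_const hb1
    calc ‖H t‖ ≤ x * |t - 1/2| := this
      _ = x * |t - 1/2| := rfl
  have hx0 : 0 ≤ x := mul_nonneg (norm_nonneg c) hM0
  have hHb1 : ∀ t ∈ Set.Icc (0:ℝ) 1, ‖H t‖ ≤ 1 := by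
    intro t ht
    exact stmt4_aux2 (hHb t ht) ht.1 ht.2 hx0 (hxle.trans hsqrt2lt.le)
  -- the final contradiction
  have hfinal : (1:ℝ) ≤ x / 2 := by
    have h1 : ∫ t in (0:ℝ)..1, (Complex.exp (H t) - 1) = -1 := by
      rw [intervalIntegral.integral_sub hintexp intervalIntegrable_const, hIeq]
      simp
    have h2 : ‖∫ t in (0:ℝ)..1, (Complex.exp (H t) - 1)‖ ≤
        |∫ t in (0:ℝ)..1, (2 * x * |t - 1/2|)| := by
      apply intervalIntegral.norm_integral_le_abs_of_norm_le
      · apply MeasureTheory.ae_restrict_of_forall_mem measurableSet_uIoc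
        intro t ht
        have ht' : t ∈ Set.Icc (0:ℝ) 1 := by
          rw [Set.uIoc_of_le (by norm_num : (0:ℝ) ≤ 1)] at ht
          exact ⟨ht.1.le, ht.2⟩
        calc ‖Complex.exp (H t) - 1‖ ≤ 2 * ‖H t‖ :=
            Complex.norm_exp_sub_one_le (hHb1 t ht')
          _ ≤ 2 * (x * |t - 1/2|) :=
            mul_le_mul_of_nonneg_left (hHb t ht') (by norm_num)
          _ = 2 * x * |t - 1/2| := (mul_assoc 2 x _).symm
      · exact (Continuous.intervalIntegrable
          (continuous_const.mul ((continuous_id.sub continuous_const).abs)) _ _)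
    have h3 : ∫ t in (0:ℝ)..1, (2 * x * |t - 1/2|) = x / 2 := by
      rw [intervalIntegral.integral_const_mul, stmt4_aux1]; ring
    rw [h1, h3] at h2
    have h4 : ‖(-1 : ℂ)‖ = 1 := by simp
    have h5 : |x / 2| = x / 2 := _root_.abs_of_nonneg (div_nonneg hx0 (by norm_num))
    rw [h4, h5] at h2
    exact h2
  exact stmt4_aux3 hfinal hxle hsqrt2lt
end

section
/- Suppose f is entire and there exist A, B, C, r_0 > 1 with A·log M(r,f) ≤ log M(Cr, f) ≤ B·log M(r,f) for r ≥ r_0, where M is the maximum modulus function. Then for every k > 1 there exists a constant d > 1 and r_1 > 0 such that log M(kr, f) ≥ d·log M(r,f) for all r ≥ r_1. -/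
open Complex
noncomputable def maxMod (f : ℂ → ℂ) (r : ℝ) : ℝ :=
  sSup ((fun z => ‖f z‖) '' {z : ℂ | ‖z‖ = r})

lemma sphere_eq (r : ℝ) : {z : ℂ | ‖z‖ = r} = Metric.sphere (0:ℂ) r := by
  ext w; simp [mem_sphere_zero_iff_norm]

lemma maxMod_bddAbove (f : ℂ → ℂ) (hf : Continuous f) (r : ℝ) :
    BddAbove ((fun z => ‖f z‖) '' {z : ℂ | ‖z‖ = r}) := by
  rw [sphere_eq]
  exact ((isCompact_sphere (0:ℂ) r).image (continuous_norm.comp hf)).bddAbove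

lemma maxMod_ge (f : ℂ → ℂ) (hf : Continuous f) {r : ℝ} {z : ℂ} (hz : ‖z‖ = r) :
    ‖f z‖ ≤ maxMod f r :=
  le_csSup (maxMod_bddAbove f hf r) (Set.mem_image_of_mem _ hz)

lemma maxMod_nonneg (f : ℂ → ℂ) {r : ℝ} (hr : 0 ≤ r) : 0 ≤ maxMod f r := by
  apply Real.sSup_nonneg
  rintro x ⟨z, _, rfl⟩
  exact norm_nonneg _

lemma norm_le_maxMod (f : ℂ → ℂ) (hf : Differentiable ℂ f) {R : ℝ} (hR : 0 < R) {z : ℂ}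
    (hz : ‖z‖ ≤ R) : ‖f z‖ ≤ maxMod f R := by
  have h1 : ∀ w ∈ frontier (Metric.ball (0:ℂ) R), ‖f w‖ ≤ maxMod f R := by
    intro w hw
    rw [frontier_ball (0:ℂ) hR.ne'] at hw
    exact maxMod_ge f hf.continuous (by simpa using mem_sphere_zero_iff_norm.mp hw)
  have h2 : z ∈ closure (Metric.ball (0:ℂ) R) := by
    rw [closure_ball (0:ℂ) hR.ne']
    rw [mem_closedBall_zero_iff]
    exact hz
  exact Complex.norm_le_of_forall_mem_frontier_norm_le Metric.isBounded_ball
    hf.diffContOnCl h1 h2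

lemma maxMod_mono (f : ℂ → ℂ) (hf : Differentiable ℂ f) {a b : ℝ} (ha : 0 ≤ a) (hb : 0 < b)
    (hab : a ≤ b) : maxMod f a ≤ maxMod f b := by
  apply csSup_le
  · exact ⟨‖f (a:ℂ)‖, (a:ℂ), by simp [_root_.abs_of_nonneg ha], rfl⟩
  · rintro x ⟨z, hz, rfl⟩
    exact norm_le_maxMod f hf hb (by rw [Set.mem_setOf_eq] at hz; linarith [hz])

lemma threeCircles (f : ℂ → ℂ) (hf : Differentiable ℂ f) {s t u : ℝ}
    (hs : 0 < s) (hst : s < t) (htu : t < u) :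
    maxMod f t ≤ maxMod f s ^ (1 - Real.log (t/s) / Real.log (u/s)) *
      maxMod f u ^ (Real.log (t/s) / Real.log (u/s)) := by
  have ht : 0 < t := hs.trans hst
  have hu : 0 < u := ht.trans htu
  set L : ℝ := Real.log (u/s) with hL
  set θ : ℝ := Real.log (t/s) / L with hθ
  have hLpos : 0 < L := Real.log_pos (by rw [lt_div_iff₀ hs]; linarith)
  have hts_pos : 0 < Real.log (t/s) := Real.log_pos (by rw [lt_div_iff₀ hs]; linarith)
  have hθ0 : 0 < θ := div_pos hts_pos hLpos
  have hθ1 : θ < 1 := by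
    rw [hθ, div_lt_one hLpos]
    exact Real.log_lt_log (by positivity) (by gcongr)
  apply csSup_le
  · exact ⟨‖f (t:ℂ)‖, (t:ℂ), by simp [_root_.abs_of_nonneg ht.le], rfl⟩
  rintro x ⟨z₀, hz₀, rfl⟩
  rw [Set.mem_setOf_eq] at hz₀
  set c : ℂ := z₀ / (t:ℂ) with hc
  have htc : (t:ℂ) ≠ 0 := by exact_mod_cast ht.ne'
  have hcabs : ‖c‖ = 1 := by
    rw [hc, norm_div, hz₀, Complex.norm_of_nonneg ht.le, div_self ht.ne']
  set g : ℂ → ℂ := fun w => f (c * Complex.exp ((Real.log s : ℂ) + w * (L : ℂ))) with hg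
  have key : ∀ w : ℂ, ‖c * Complex.exp ((Real.log s : ℂ) + w * (L : ℂ))‖
      = Real.exp (Real.log s + w.re * L) := by
    intro w
    rw [norm_mul, hcabs, one_mul, Complex.norm_exp]
    norm_num [Complex.add_re, Complex.mul_re]
  have hgd : Differentiable ℂ g :=
    hf.comp ((((differentiable_id.mul_const ((L:ℝ):ℂ)).const_add _).cexp).const_mul c)
  have hlogu : Real.log s + L = Real.log u := by
    rw [hL, Real.log_div hu.ne' hs.ne']; ring
  have hlogt : Real.log s + θ * L = Real.log t := by
    rw [hθ, div_mul_cancel₀ _ hLpos.ne', Real.log_div ht.ne' hs.ne']; ring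
  have hmain := Complex.HadamardThreeLines.norm_le_interp_of_mem_verticalClosedStrip₀₁' g
    (z := (θ:ℂ)) (a := maxMod f s) (b := maxMod f u)
    (by simp [Complex.HadamardThreeLines.verticalClosedStrip, Set.mem_preimage,
          Complex.ofReal_re]; exact ⟨hθ0.le, hθ1.le⟩)
    hgd.diffContOnCl
    (by
      refine ⟨maxMod f u, ?_⟩
      rintro x ⟨w, hw, rfl⟩
      simp only [Function.comp_apply, hg]
      apply norm_le_maxMod f hf hu
      rw [key w]
      rw [← Real.exp_log hu, ← hlogu]
      apply Real.exp_le_exp.mpr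
      have hw1 : w.re ≤ 1 := hw.2
      nlinarith [hw.1, hw.2, hLpos])
    (by
      intro w hw
      simp only [Set.mem_preimage, Set.mem_singleton_iff] at hw
      simp only [hg]
      apply maxMod_ge f hf.continuous
      rw [key w, hw]; simp [Real.exp_log hs])
    (by
      intro w hw
      simp only [Set.mem_preimage, Set.mem_singleton_iff] at hw
      simp only [hg]
      apply maxMod_ge f hf.continuous
      rw [key w, hw, one_mul, hlogu, Real.exp_log hu])
  have hgθ : g (θ:ℂ) = f z₀ := by
    show f (c * Complex.exp ((Real.log s : ℂ) + (θ:ℂ) * (L:ℂ))) = f z₀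
    congr 1
    have : (Real.log s : ℂ) + (θ:ℂ) * (L:ℂ) = ((Real.log t : ℝ) : ℂ) := by
      rw [← hlogt]; push_cast; ring
    rw [this, ← Complex.ofReal_exp, Real.exp_log ht, hc, div_mul_cancel₀ _ htc]
  rw [hgθ, Complex.ofReal_re] at hmain
  exact hmain

set_option maxHeartbeats 1600000 in
theorem stmt18 (f : ℂ → ℂ) (hf : Differentiable ℂ f)
    (A B C r₀ : ℝ) (hA : 1 < A) (hB : 1 < B) (hC : 1 < C) (hr₀ : 1 < r₀)
    (hM : ∀ r ≥ r₀, A * Real.log (maxMod f r) ≤ Real.log (maxMod f (C * r)) ∧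
      Real.log (maxMod f (C * r)) ≤ B * Real.log (maxMod f r)) :
    ∀ k : ℝ, 1 < k → ∃ d : ℝ, 1 < d ∧ ∃ r₁ : ℝ, 0 < r₁ ∧
      ∀ r ≥ r₁, d * Real.log (maxMod f r) ≤ Real.log (maxMod f (k * r)) := by
  intro k hk
  by_cases hzero : ∀ z, f z = 0
  · refine ⟨2, one_lt_two, 1, one_pos, fun r hr => ?_⟩
    have him : ∀ ρ : ℝ, 0 ≤ ρ → maxMod f ρ = 0 := by
      intro ρ hρ
      have : (fun z => ‖f z‖) '' {z : ℂ | ‖z‖ = ρ} = {0} := by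
        apply subset_antisymm
        · rintro x ⟨z, _, rfl⟩; simp [hzero z]
        · rintro x hx
          rw [Set.mem_singleton_iff] at hx
          exact ⟨(ρ:ℂ), by simp [_root_.abs_of_nonneg hρ], by simp [hzero, hx]⟩
      rw [maxMod, this, csSup_singleton]
    rw [him r (by linarith), him (k*r) (by nlinarith)]
    simp
  · push_neg at hzero
    obtain ⟨z₀, hz₀⟩ := hzero
    have hC0 : 0 < C := by linarith
    set lC := Real.log C with hlC
    set lk := Real.log k with hlk
    have hlCpos : 0 < lC := Real.log_pos hC
    have hlkpos : 0 < lk := Real.log_pos hk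
    set θ : ℝ := lC / (lk + lC) with hθ
    have hθ0 : 0 < θ := div_pos hlCpos (by linarith)
    have hθ1 : θ < 1 := by rw [hθ, div_lt_one (by linarith)]; linarith
    set d : ℝ := (A - 1 + θ) / (A * θ) with hd
    have hAθ : 0 < A * θ := by positivity
    have hd1 : 1 < d := by
      rw [hd, lt_div_iff₀ hAθ]
      nlinarith
    refine ⟨d, hd1, max (C * r₀) (‖z₀‖ + 1), lt_max_of_lt_left (by nlinarith), ?_⟩
    intro r hr
    have hrC : C * r₀ ≤ r := le_trans (le_max_left _ _) hr
    have hrz : ‖z₀‖ + 1 ≤ r := le_trans (le_max_right _ _) hr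
    have hr0 : 0 < r := by nlinarith
    have hsr : r / C < r := div_lt_self hr0 hC
    have hs0 : 0 < r / C := div_pos hr0 hC0
    have hrk : r < k * r := by nlinarith
    have hr₀C : r₀ ≤ r / C := by rw [le_div_iff₀ hC0]; linarith [hrC]
    have hMr_pos : 0 < maxMod f r :=
      lt_of_lt_of_le (norm_pos_iff.mpr hz₀)
        (norm_le_maxMod f hf hr0 (by linarith [norm_nonneg z₀]))
    have hMk_pos : 0 < maxMod f (k * r) :=
      lt_of_lt_of_le hMr_pos (maxMod_mono f hf hr0.le (by nlinarith) hrk.le)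
    -- three circles
    have e1 : r / (r / C) = C := by field_simp
    have e2 : k * r / (r / C) = k * C := by field_simp
    have H := threeCircles f hf hs0 hsr hrk
    rw [e1, e2, Real.log_mul (by linarith) (by linarith), ← hlk, ← hlC, ← hθ] at H
    have hMs_pos : 0 < maxMod f (r / C) := by
      rcases lt_or_eq_of_le (maxMod_nonneg f hs0.le) with h | h
      · exact h
      · exfalso
        rw [← h, Real.zero_rpow (by linarith), zero_mul] at H
        linarith
    -- take logs
    have hlog : Real.log (maxMod f r) ≤ (1 - θ) * Real.log (maxMod f (r / C))
        + θ * Real.log (maxMod f (k * r)) := by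
      have := Real.log_le_log hMr_pos H
      rwa [Real.log_mul (by positivity) (by positivity), Real.log_rpow hMs_pos,
        Real.log_rpow hMk_pos] at this
    have hsle : A * Real.log (maxMod f (r / C)) ≤ Real.log (maxMod f r) := by
      have h := (hM (r / C) hr₀C).1
      rwa [mul_div_cancel₀ _ hC0.ne'] at h
    set x := Real.log (maxMod f r) with hxdef
    set y := Real.log (maxMod f (k * r)) with hydef
    set m := Real.log (maxMod f (r / C))
    have hdAθ : d * (A * θ) = A - 1 + θ := div_mul_cancel₀ _ hAθ.ne'
    have hA0 : (0:ℝ) < A := by linarith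
    clear_value x y m d θ lC lk
    rcases le_or_gt 0 x with hx | hx
    · 
      have h1 : A * x ≤ A * (1 - θ) * m + A * θ * y := by nlinarith [hlog]
      have h2 : A * (1 - θ) * m ≤ (1 - θ) * x := by nlinarith [hsle]
      have h3 : (A - 1 + θ) * x ≤ A * θ * y := by nlinarith
      have h5 : (A * θ) * (d * x) = (A - 1 + θ) * x := by rw [← hdAθ]; ring
      have h6 : (A * θ) * (d * x) ≤ (A * θ) * y := by rw [h5]; linarith
      exact le_of_mul_le_mul_left h6 hAθ
    · have h1 : d * x ≤ x := by
        have hdx : (d - 1) * x ≤ 0 := mul_nonpos_of_nonneg_of_nonpos (by linarith) hx.le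
        linarith
      have h2 : x ≤ y := by
        rw [hxdef, hydef]
        exact Real.log_le_log hMr_pos (maxMod_mono f hf hr0.le (by nlinarith) hrk.le)
      linarith
end
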